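/- Assume F has no ties. The following are equivalent: (i) both representations Pr(T > t) = ∑_k Pr(T = X_{k:n}) Pr(X_{k:n} > t) and Pr(T > t) = ∑_k (φ_{n−k+1} − φ_{n−k}) Pr(X_{k:n} > t) hold for every semicoherent φ and every t > 0; (ii) Pr(T = X_{k:n}) = φ_{n−k+1} − φ_{n−k} for every semicoherent φ and every k, and χ_1(t),...,χ_n(t) are exchangeable for every t > 0; (iii) the relative quality function q satisfies q(A) = 1/C(n,|A|) for all A, and χ_1(t),...,χ_n(t) are exchangeable for every t > 0. -/

import Mathlib

open MeasureTheory
open scoped ProbabilityTheory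

/-- Number of ones in `x ∈ {0,1}^n`. -/
def cntOnes {n : ℕ} (x : Fin n → Bool) : ℕ :=
  (Finset.univ.filter fun i => x i = true).card

/-- `φ` is a semicoherent structure function: nondecreasing, `φ(0)=0`, `φ(1)=1`. -/
def Semicoherent {n : ℕ} (φ : (Fin n → Bool) → Bool) : Prop :=
  (∀ x y : Fin n → Bool, (∀ i, x i ≤ y i) → φ x ≤ φ y) ∧
    φ (fun _ => false) = false ∧ φ (fun _ => true) = true

/-- `φ_j = C(n,j)⁻¹ ∑_{|x|=j} φ(x)`. -/
noncomputable def phiAvg {n : ℕ} (φ : (Fin n → Bool) → Bool) (j : ℕ) : ℝ :=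
  ((n.choose j : ℝ))⁻¹ *
    ∑ x ∈ Finset.univ.filter (fun x : Fin n → Bool => cntOnes x = j),
      (if φ x then (1 : ℝ) else 0)

set_option linter.unusedSectionVars false
set_option linter.unusedVariables false

namespace SC17

open Finset

def leB {n : ℕ} (x y : Fin n → Bool) : Prop := ∀ i, x i = true → y i = true

instance {n : ℕ} (x : Fin n → Bool) : DecidablePred (leB x) := fun y =>
  inferInstanceAs (Decidable (∀ i, x i = true → y i = true))

lemma leB_refl {n : ℕ} (x : Fin n → Bool) : leB x x := fun _ h => h

lemma filter_subset_of_leB {n : ℕ} {x y : Fin n → Bool} (h : leB x y) :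
    (Finset.univ.filter fun i => x i = true) ⊆ (Finset.univ.filter fun i => y i = true) := by
  intro i hi
  simp only [mem_filter, mem_univ, true_and] at hi ⊢
  exact h i hi

lemma cntOnes_le_of_leB {n : ℕ} {x y : Fin n → Bool} (h : leB x y) : cntOnes x ≤ cntOnes y :=
  Finset.card_le_card (filter_subset_of_leB h)

lemma cntOnes_le {n : ℕ} (x : Fin n → Bool) : cntOnes x ≤ n := by
  calc cntOnes x ≤ (Finset.univ : Finset (Fin n)).card := Finset.card_filter_le _ _
  _ = n := by simp

lemma eq_of_leB_of_cnt {n : ℕ} {x y : Fin n → Bool} (h : leB x y)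
    (hc : cntOnes y ≤ cntOnes x) : x = y := by
  have heq := Finset.eq_of_subset_of_card_le (filter_subset_of_leB h) hc
  funext i
  have : (i ∈ Finset.univ.filter fun j => x j = true) ↔
      (i ∈ Finset.univ.filter fun j => y j = true) := by rw [heq]
  simp only [mem_filter, mem_univ, true_and] at this
  cases hx : x i <;> cases hy : y i <;> simp_all

lemma cnt_lt_of_leB_ne {n : ℕ} {x y : Fin n → Bool} (h : leB x y) (hne : y ≠ x) :
    cntOnes x < cntOnes y := by
  rcases lt_or_ge (cntOnes x) (cntOnes y) with h'|h'
  · exact h'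
  · exact absurd (eq_of_leB_of_cnt h h').symm hne

lemma eq_top_of_cnt {n : ℕ} {x : Fin n → Bool} (h : cntOnes x = n) : x = fun _ => true := by
  refine eq_of_leB_of_cnt (x := x) (y := fun _ => true) (fun _ _ => rfl) ?_
  rw [h]
  simpa using cntOnes_le (fun _ : Fin n => true)

lemma cntOnes_top {n : ℕ} : cntOnes (fun _ : Fin n => true) = n := by
  simp [cntOnes]

lemma eq_bot_of_cnt {n : ℕ} {x : Fin n → Bool} (h : cntOnes x = 0) : x = fun _ => false := by
  have hemp : (Finset.univ.filter fun i => x i = true) = ∅ := Finset.card_eq_zero.mp h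
  funext i
  cases hx : x i
  · rfl
  · exfalso
    have : i ∈ (Finset.univ.filter fun j => x j = true) := by
      simp [mem_filter, hx]
    rw [hemp] at this
    exact absurd this (Finset.notMem_empty i)

lemma cntOnes_bot {n : ℕ} : cntOnes (fun _ : Fin n => false) = 0 := by
  simp [cntOnes]

lemma level_zero {n : ℕ} :
    (Finset.univ.filter fun x : Fin n → Bool => cntOnes x = 0) = {fun _ => false} := by
  ext x
  simp only [mem_filter, mem_univ, true_and, Finset.mem_singleton]
  constructor
  · exact eq_bot_of_cnt
  · rintro rfl; exact cntOnes_bot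

lemma card_level {n m : ℕ} :
    (Finset.univ.filter fun x : Fin n → Bool => cntOnes x = m).card = n.choose m := by
  have hn : n.choose m = (Finset.powersetCard m (Finset.univ : Finset (Fin n))).card := by
    rw [Finset.card_powersetCard]; simp
  rw [hn]
  apply Finset.card_bij (fun x _ => Finset.univ.filter fun i => x i = true)
  · intro x hx
    simp only [mem_filter, mem_univ, true_and] at hx
    simpa [Finset.mem_powersetCard, cntOnes] using hx
  · intro x hx y hy hxy
    simp only [mem_filter, mem_univ, true_and] at hx hy
    funext i
    have : (i ∈ Finset.univ.filter fun j => x j = true) ↔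
        (i ∈ Finset.univ.filter fun j => y j = true) := by rw [hxy]
    simp only [mem_filter, mem_univ, true_and] at this
    cases h1 : x i <;> cases h2 : y i <;> simp_all
  · intro s hs
    simp only [Finset.mem_powersetCard] at hs
    refine ⟨fun i => decide (i ∈ s), ?_, ?_⟩
    · simp [mem_filter, cntOnes, ← hs.2]
    · ext i; simp

def phiUp {n : ℕ} (x0 : Fin n → Bool) : (Fin n → Bool) → Bool := fun y => decide (leB x0 y)

lemma phiUp_eq_true_iff {n : ℕ} (x0 y : Fin n → Bool) : phiUp x0 y = true ↔ leB x0 y := by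
  simp [phiUp]

lemma phiUp_mono {n : ℕ} (x0 : Fin n → Bool) (x y : Fin n → Bool) (h : ∀ i, x i ≤ y i) :
    phiUp x0 x ≤ phiUp x0 y := by
  by_cases hl : leB x0 x
  · have hy : leB x0 y := by
      intro i hi
      have h1 := hl i hi
      have h2 := h i
      rw [h1] at h2
      cases hy : y i
      · rw [hy] at h2; exact absurd h2 (by decide)
      · rfl
    simp [phiUp, hl, hy]
  · simp [phiUp, hl]

lemma phiUp_bot {n : ℕ} (x0 : Fin n → Bool) (h : 1 ≤ cntOnes x0) :
    phiUp x0 (fun _ => false) = false := by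
  obtain ⟨i, hi⟩ : ∃ i, x0 i = true := by
    have := Finset.card_pos.mp (by simpa [cntOnes] using h)
    obtain ⟨i, hi⟩ := this
    exact ⟨i, by simpa using hi⟩
  simp only [phiUp, decide_eq_false_iff_not]
  intro hl
  exact absurd (hl i hi) (by simp)

lemma phiUp_top {n : ℕ} (x0 : Fin n → Bool) : phiUp x0 (fun _ => true) = true := by
  simp [phiUp, leB]

lemma semicoherent_phiUp {n : ℕ} (x0 : Fin n → Bool) (h : 1 ≤ cntOnes x0) :
    Semicoherent (phiUp x0) :=
  ⟨phiUp_mono x0, phiUp_bot x0 h, phiUp_top x0⟩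

lemma sum_mul_ite {n : ℕ} (s : Finset (Fin n → Bool)) (φ : (Fin n → Bool) → Bool)
    (f : (Fin n → Bool) → ℝ) :
    ∑ x ∈ s, f x * (if φ x then (1:ℝ) else 0) = ∑ x ∈ s.filter (fun x => φ x = true), f x := by
  rw [Finset.sum_filter]
  apply Finset.sum_congr rfl
  intro x _
  by_cases h : φ x = true <;> simp [h]

lemma filter_phiUp_level_self {n : ℕ} (x0 : Fin n → Bool) :
    ((Finset.univ.filter fun x : Fin n → Bool => cntOnes x = cntOnes x0).filter
      (fun x => phiUp x0 x = true)) = {x0} := by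
  ext x
  simp only [Finset.mem_filter, Finset.mem_univ, true_and, Finset.mem_singleton,
    phiUp_eq_true_iff]
  constructor
  · rintro ⟨hc, hl⟩
    exact (eq_of_leB_of_cnt hl (le_of_eq hc)).symm
  · rintro rfl
    exact ⟨rfl, leB_refl _⟩

lemma filter_phiUp_level_lt {n : ℕ} (x0 : Fin n → Bool) {j : ℕ} (hj : j < cntOnes x0) :
    ((Finset.univ.filter fun x : Fin n → Bool => cntOnes x = j).filter
      (fun x => phiUp x0 x = true)) = ∅ := by
  ext x
  simp only [Finset.mem_filter, Finset.mem_univ, true_and, Finset.notMem_empty, iff_false,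
    phiUp_eq_true_iff]
  rintro ⟨hc, hl⟩
  have := cntOnes_le_of_leB hl
  omega

lemma filter_phiUp_univ {n : ℕ} (x0 : Fin n → Bool) :
    (Finset.univ.filter fun x : Fin n → Bool => phiUp x0 x = true)
      = Finset.univ.filter (leB x0) := by
  apply Finset.filter_congr
  intro x _
  rw [phiUp_eq_true_iff]

lemma filter_leB_top {n : ℕ} :
    (Finset.univ.filter (leB (fun _ : Fin n => true))) = {fun _ => true} := by
  ext x
  simp only [Finset.mem_filter, Finset.mem_univ, true_and, Finset.mem_singleton]
  constructor
  · intro h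
    funext i
    exact h i rfl
  · rintro rfl
    exact leB_refl _

lemma tele (c : ℕ → ℝ) (M : ℕ) : ∑ j ∈ Finset.Icc 1 M, (c j - c (j-1)) = c M - c 0 := by
  induction M with
  | zero => simp
  | succ M ih =>
    rw [Finset.sum_Icc_succ_top (by omega : 1 ≤ M + 1), ih]
    simp only [Nat.add_sub_cancel]
    ring

lemma abel (n : ℕ) (pE : (Fin n → Bool) → ℝ) (c : ℕ → ℝ) (hc0 : c 0 = 0) :
    ∑ k ∈ Finset.Icc 1 n, (c (n-k+1) - c (n-k)) *
      (∑ x ∈ Finset.univ.filter (fun x : Fin n → Bool => n+1-k ≤ cntOnes x), pE x)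
    = ∑ x : Fin n → Bool, pE x * c (cntOnes x) := by
  have step1 : ∑ k ∈ Finset.Icc 1 n, (c (n-k+1) - c (n-k)) *
      (∑ x ∈ Finset.univ.filter (fun x : Fin n → Bool => n+1-k ≤ cntOnes x), pE x)
    = ∑ j ∈ Finset.Icc 1 n, (c j - c (j-1)) *
      (∑ x ∈ Finset.univ.filter (fun x : Fin n → Bool => j ≤ cntOnes x), pE x) := by
    apply Finset.sum_nbij' (fun k => n + 1 - k) (fun j => n + 1 - j)
    · intro k hk; simp only [Finset.mem_Icc] at *; omega
    · intro k hk; simp only [Finset.mem_Icc] at *; omega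
    · intro k hk; simp only [Finset.mem_Icc] at hk; omega
    · intro k hk; simp only [Finset.mem_Icc] at hk; omega
    · intro k hk
      simp only [Finset.mem_Icc] at hk
      have e1 : n - k + 1 = n + 1 - k := by omega
      have e2 : n - k = n + 1 - k - 1 := by omega
      rw [e1, e2]
  rw [step1]
  have step2 : ∀ j, (∑ x ∈ Finset.univ.filter (fun x : Fin n → Bool => j ≤ cntOnes x), pE x)
      = ∑ x : Fin n → Bool, if j ≤ cntOnes x then pE x else 0 := by
    intro j; rw [Finset.sum_filter]
  have step3 : ∑ j ∈ Finset.Icc 1 n, (c j - c (j-1)) *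
      (∑ x ∈ Finset.univ.filter (fun x : Fin n → Bool => j ≤ cntOnes x), pE x)
    = ∑ j ∈ Finset.Icc 1 n, ∑ x : Fin n → Bool,
        (c j - c (j-1)) * (if j ≤ cntOnes x then pE x else 0) := by
    apply Finset.sum_congr rfl
    intro j _
    rw [step2 j, Finset.mul_sum]
  rw [step3, Finset.sum_comm]
  apply Finset.sum_congr rfl
  intro x _
  have hx : cntOnes x ≤ n := cntOnes_le x
  calc ∑ j ∈ Finset.Icc 1 n, (c j - c (j-1)) * (if j ≤ cntOnes x then pE x else 0)
      = ∑ j ∈ Finset.Icc 1 (cntOnes x), (c j - c (j-1)) * pE x := by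
        rw [← Finset.sum_filter_add_sum_filter_not (Finset.Icc 1 n) (fun j => j ≤ cntOnes x)]
        have h1 : (Finset.Icc 1 n).filter (fun j => j ≤ cntOnes x) = Finset.Icc 1 (cntOnes x) := by
          ext j; simp only [Finset.mem_filter, Finset.mem_Icc]; omega
        rw [h1]
        have h2 : ∑ j ∈ (Finset.Icc 1 n).filter (fun j => ¬ j ≤ cntOnes x),
            (c j - c (j-1)) * (if j ≤ cntOnes x then pE x else 0) = 0 := by
          apply Finset.sum_eq_zero
          intro j hj
          simp only [Finset.mem_filter] at hj
          simp [hj.2]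
        rw [h2, add_zero]
        apply Finset.sum_congr rfl
        intro j hj
        simp only [Finset.mem_Icc] at hj
        simp [hj.2]
    _ = (∑ j ∈ Finset.Icc 1 (cntOnes x), (c j - c (j-1))) * pE x := by
        rw [Finset.sum_mul]
    _ = pE x * c (cntOnes x) := by
        rw [tele, hc0, sub_zero, mul_comm]

lemma mobius2 (n : ℕ) (g : (Fin n → Bool) → ℝ) (w : ℕ → ℝ → ℝ)
    (h : ∀ x0 : Fin n → Bool, 1 ≤ cntOnes x0 → ∀ t : ℝ, 0 < t →
      ∑ y ∈ Finset.univ.filter (leB x0), w (cntOnes y) t * g y = 0)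
    (hpos : ∀ m, 1 ≤ m → m < n → ∃ t, 0 < t ∧ 0 < w m t)
    (htop : ∀ x : Fin n → Bool, cntOnes x = n → g x = 0) :
    ∀ x, 1 ≤ cntOnes x → g x = 0 := by
  suffices H : ∀ d, ∀ x : Fin n → Bool, 1 ≤ cntOnes x → n - cntOnes x ≤ d → g x = 0 by
    intro x hx; exact H n x hx (by omega)
  intro d
  induction d with
  | zero =>
    intro x hx hd
    exact htop x (by have := cntOnes_le x; omega)
  | succ d ih =>
    intro x hx hd
    by_cases hxn : cntOnes x = n
    · exact htop x hxn
    · obtain ⟨t, ht, hw⟩ := hpos (cntOnes x) hx (by have := cntOnes_le x; omega)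
      have h0 := h x hx t ht
      have hmem : x ∈ Finset.univ.filter (leB x) := by
        simp [Finset.mem_filter, leB_refl]
      rw [← Finset.sum_erase_add _ _ hmem] at h0
      have hzero : ∑ y ∈ (Finset.univ.filter (leB x)).erase x,
          w (cntOnes y) t * g y = 0 := by
        apply Finset.sum_eq_zero
        intro y hy
        rw [Finset.mem_erase, Finset.mem_filter] at hy
        have hlt := cnt_lt_of_leB_ne hy.2.2 hy.1
        have hy0 : g y = 0 := ih y (by omega) (by have := cntOnes_le y; omega)
        simp [hy0]
      rw [hzero, zero_add] at h0
      rcases mul_eq_zero.mp h0 with h' | h'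
      · exact absurd h' (ne_of_gt hw)
      · exact h'

lemma key_id {n : ℕ} (pE : (Fin n → Bool) → ℝ) (φ : (Fin n → Bool) → Bool)
    (v : (Fin n → Bool) → ℝ) :
    ∑ x : Fin n → Bool, pE x *
        (∑ y ∈ Finset.univ.filter (fun y : Fin n → Bool => cntOnes y = cntOnes x),
          v y * (if φ y then (1:ℝ) else 0))
    = ∑ y ∈ Finset.univ.filter (fun y : Fin n → Bool => φ y = true),
        (∑ x ∈ Finset.univ.filter (fun x : Fin n → Bool => cntOnes x = cntOnes y), pE x)
          * v y := by
  have L : ∀ x : Fin n → Bool,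
      pE x * (∑ y ∈ Finset.univ.filter (fun y : Fin n → Bool => cntOnes y = cntOnes x),
          v y * (if φ y then (1:ℝ) else 0))
      = ∑ y : Fin n → Bool,
          (if φ y = true ∧ cntOnes y = cntOnes x then pE x * v y else 0) := by
    intro x
    rw [Finset.sum_filter, Finset.mul_sum]
    apply Finset.sum_congr rfl
    intro y _
    by_cases hφ : φ y = true
    · by_cases hc : cntOnes y = cntOnes x <;> simp [hφ, hc]
    · by_cases hc : cntOnes y = cntOnes x <;> simp [hφ, hc]
  have R : ∀ y : Fin n → Bool,
      (if φ y = true then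
        (∑ x ∈ Finset.univ.filter (fun x : Fin n → Bool => cntOnes x = cntOnes y), pE x) * v y
       else 0)
      = ∑ x : Fin n → Bool,
          (if φ y = true ∧ cntOnes y = cntOnes x then pE x * v y else 0) := by
    intro y
    by_cases hφ : φ y = true
    · rw [if_pos hφ, Finset.sum_filter, Finset.sum_mul]
      apply Finset.sum_congr rfl
      intro x _
      by_cases hc : cntOnes x = cntOnes y
      · simp [hφ, hc]
      · simp only [hφ, true_and]
        rw [if_neg hc, if_neg (fun h => hc h.symm), zero_mul]
    · rw [if_neg hφ]
      symm
      apply Finset.sum_eq_zero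
      intro x _
      simp [hφ]
  calc ∑ x : Fin n → Bool, pE x *
        (∑ y ∈ Finset.univ.filter (fun y : Fin n → Bool => cntOnes y = cntOnes x),
          v y * (if φ y then (1:ℝ) else 0))
      = ∑ x : Fin n → Bool, ∑ y : Fin n → Bool,
          (if φ y = true ∧ cntOnes y = cntOnes x then pE x * v y else 0) := by
        exact Finset.sum_congr rfl (fun x _ => L x)
    _ = ∑ y : Fin n → Bool, ∑ x : Fin n → Bool,
          (if φ y = true ∧ cntOnes y = cntOnes x then pE x * v y else 0) := Finset.sum_comm
    _ = ∑ y : Fin n → Bool,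
          (if φ y = true then
            (∑ x ∈ Finset.univ.filter (fun x : Fin n → Bool => cntOnes x = cntOnes y), pE x)
              * v y
           else 0) := by
        exact Finset.sum_congr rfl (fun y _ => (R y).symm)
    _ = ∑ y ∈ Finset.univ.filter (fun y : Fin n → Bool => φ y = true),
          (∑ x ∈ Finset.univ.filter (fun x : Fin n → Bool => cntOnes x = cntOnes y), pE x)
            * v y := by
        rw [Finset.sum_filter]

lemma phiAvg_eq_sum {n : ℕ} (φ : (Fin n → Bool) → Bool) (j : ℕ) :
    phiAvg φ j = ∑ y ∈ Finset.univ.filter (fun y : Fin n → Bool => cntOnes y = j),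
      ((n.choose (cntOnes y) : ℝ))⁻¹ * (if φ y then (1:ℝ) else 0) := by
  rw [phiAvg, Finset.mul_sum]
  apply Finset.sum_congr rfl
  intro y hy
  simp only [Finset.mem_filter] at hy
  rw [hy.2]

lemma phiAvg_zero {n : ℕ} (φ : (Fin n → Bool) → Bool) (hbot : φ (fun _ => false) = false) :
    phiAvg φ 0 = 0 := by
  rw [phiAvg, level_zero, Finset.sum_singleton, hbot]
  simp

lemma sum_ite_card {n : ℕ} (s : Finset (Fin n → Bool)) (φ : (Fin n → Bool) → Bool) :
    ∑ x ∈ s, (if φ x then (1:ℝ) else 0) = ((s.filter (fun x => φ x = true)).card : ℝ) := by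
  rw [← Finset.sum_filter, Finset.sum_const, nsmul_eq_mul, mul_one]

lemma mobius1 (n : ℕ) (hn : 1 ≤ n) (g : (Fin n → Bool) → ℝ)
    (h : ∀ x0 : Fin n → Bool, 1 ≤ cntOnes x0 →
      ∑ y ∈ Finset.univ.filter (leB x0), g y = 0) :
    ∀ x, 1 ≤ cntOnes x → g x = 0 := by
  apply mobius2 n g (fun _ _ => 1)
  · intro x0 hx0 t ht
    have h' := h x0 hx0
    simpa using h'
  · intro m _ _
    exact ⟨1, one_pos, one_pos⟩
  · intro x hx
    have := h (fun _ => true) (by rw [cntOnes_top]; omega)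
    rw [filter_leB_top, Finset.sum_singleton] at this
    rw [eq_top_of_cnt hx]
    exact this


section Meas

variable {Ω : Type*} [MeasureSpace Ω] [IsProbabilityMeasure (ℙ : Measure Ω)]
  {n : ℕ} (X : Fin n → Ω → ℝ)

lemma meas_chi (hX : ∀ i, Measurable (X i)) (t : ℝ) (x : Fin n → Bool) :
    MeasurableSet {ω | (fun i => decide (t < X i ω)) = x} := by
  have hset : {ω | (fun i => decide (t < X i ω)) = x} =
      ⋂ i, {ω | decide (t < X i ω) = x i} := by
    ext ω; simp [funext_iff]
  rw [hset]
  apply MeasurableSet.iInter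
  intro i
  cases hxi : x i
  · have h' : {ω : Ω | decide (t < X i ω) = false} = {ω | t < X i ω}ᶜ := by
      ext ω; simp
    rw [h']
    exact (measurableSet_lt measurable_const (hX i)).compl
  · have h' : {ω : Ω | decide (t < X i ω) = true} = {ω | t < X i ω} := by
      ext ω; simp
    rw [h']
    exact measurableSet_lt measurable_const (hX i)

lemma partition (hX : ∀ i, Measurable (X i)) (P : (Fin n → Bool) → Prop) [DecidablePred P]
    (t : ℝ) :
    ℙ {ω | P (fun i => decide (t < X i ω))} =
      ∑ x ∈ Finset.univ.filter P, ℙ {ω | (fun i => decide (t < X i ω)) = x} := by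
  have hset : {ω | P (fun i => decide (t < X i ω))} =
      ⋃ x ∈ Finset.univ.filter P, {ω | (fun i => decide (t < X i ω)) = x} := by
    ext ω
    simp only [Set.mem_setOf_eq, Set.mem_iUnion, Finset.mem_filter, Finset.mem_univ, true_and]
    constructor
    · intro h; exact ⟨_, h, rfl⟩
    · rintro ⟨x, hPx, hx⟩; rw [hx]; exact hPx
  rw [hset]
  rw [measure_biUnion_finset ?_ (fun x _ => meas_chi X hX t x)]
  intro x hx y hy hxy
  simp only [Function.onFun]
  rw [Set.disjoint_left]
  intro ω h1 h2
  exact hxy (h1.symm.trans h2)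

lemma toReal_partition (hX : ∀ i, Measurable (X i)) (P : (Fin n → Bool) → Prop)
    [DecidablePred P] (t : ℝ) :
    (ℙ {ω | P (fun i => decide (t < X i ω))}).toReal =
      ∑ x ∈ Finset.univ.filter P, (ℙ {ω | (fun i => decide (t < X i ω)) = x}).toReal := by
  rw [partition X hX P t, ENNReal.toReal_sum]
  intro x _
  exact measure_ne_top _ _

lemma cnt_bridge (t : ℝ) (ω : Ω) :
    (Finset.univ.filter fun i => t < X i ω).card = cntOnes (fun i => decide (t < X i ω)) := by
  unfold cntOnes
  congr 1
  apply Finset.filter_congr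
  intro i _
  simp

end Meas

section Key

lemma keyPoint {n : ℕ} (f : Fin n → ℝ) (hpos : ∀ i, 0 < f i)
    (hinj : ∀ i j : Fin n, i ≠ j → f i ≠ f j) {m : ℕ} (hm1 : 1 ≤ m) (hm2 : m < n) :
    ∃ r : ℚ, 0 < (r:ℝ) ∧ (Finset.univ.filter fun i => (r:ℝ) < f i).card = m := by
  have hinj' : Function.Injective f := by
    intro i j h
    by_contra hne
    exact hinj i j hne h
  set s : Finset ℝ := Finset.univ.image f with hs
  have hcard : s.card = n := by
    rw [hs, Finset.card_image_of_injective _ hinj', Finset.card_univ, Fintype.card_fin]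
  -- find v ∈ s with exactly m elements above it
  have hsurj : ∀ b ∈ Finset.range n, ∃ a, ∃ ha : a ∈ s, b = (s.filter fun c => a < c).card := by
    apply Finset.surj_on_of_inj_on_of_card_le (f := fun a _ => (s.filter fun c => a < c).card)
    · intro a ha
      rw [Finset.mem_range]
      have hsub : (s.filter fun c => a < c) ⊆ s.erase a := by
        intro c hc
        simp only [Finset.mem_filter] at hc
        rw [Finset.mem_erase]
        exact ⟨ne_of_gt hc.2, hc.1⟩
      calc (s.filter fun c => a < c).card ≤ (s.erase a).card := Finset.card_le_card hsub
        _ < s.card := Finset.card_erase_lt_of_mem ha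
        _ = n := hcard
    · intro a b ha hb hab
      by_contra hne
      rcases lt_trichotomy a b with h | h | h
      · have hss : (s.filter fun c => b < c) ⊂ (s.filter fun c => a < c) := by
          constructor
          · intro c hc
            simp only [Finset.mem_filter] at hc ⊢
            exact ⟨hc.1, lt_trans h hc.2⟩
          · intro hsub
            have : b ∈ s.filter fun c => a < c := by
              simp only [Finset.mem_filter]; exact ⟨hb, h⟩
            have := hsub this
            simp only [Finset.mem_filter] at this
            exact lt_irrefl b this.2
        exact absurd hab (ne_of_gt (Finset.card_lt_card hss))
      · exact hne h
      · have hss : (s.filter fun c => a < c) ⊂ (s.filter fun c => b < c) := by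
          constructor
          · intro c hc
            simp only [Finset.mem_filter] at hc ⊢
            exact ⟨hc.1, lt_trans h hc.2⟩
          · intro hsub
            have : a ∈ s.filter fun c => b < c := by
              simp only [Finset.mem_filter]; exact ⟨ha, h⟩
            have := hsub this
            simp only [Finset.mem_filter] at this
            exact lt_irrefl a this.2
        exact absurd hab (ne_of_lt (Finset.card_lt_card hss))
    · rw [hcard, Finset.card_range]
  obtain ⟨v, hv, hvm⟩ := hsurj m (Finset.mem_range.mpr hm2)
  -- v > 0
  have hv0 : 0 < v := by
    rw [hs] at hv
    obtain ⟨i, _, rfl⟩ := Finset.mem_image.mp hv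
    exact hpos i
  -- the set above v is nonempty
  have hune : (s.filter fun c => v < c).Nonempty := by
    rw [← Finset.card_pos, ← hvm]
    omega
  obtain ⟨w, hwmem, hwle⟩ := Finset.exists_min_image (s.filter fun c => v < c) id hune
  rw [Finset.mem_filter] at hwmem
  have hvw : v < w := hwmem.2
  obtain ⟨r, hr1, hr2⟩ := exists_rat_btwn hvw
  refine ⟨r, lt_trans hv0 hr1, ?_⟩
  -- filters agree
  have hfeq : (s.filter fun c => (r:ℝ) < c) = (s.filter fun c => v < c) := by
    apply Finset.filter_congr
    intro c hc
    constructor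
    · intro h; exact lt_trans hr1 h
    · intro h
      have hcu : c ∈ s.filter fun c => v < c := by
        rw [Finset.mem_filter]; exact ⟨hc, h⟩
      have := hwle c hcu
      simp only [id] at this
      exact lt_of_lt_of_le hr2 this
  have himg : (Finset.univ.filter fun i => (r:ℝ) < f i).image f
      = s.filter fun c => (r:ℝ) < c := by
    ext c
    simp only [Finset.mem_image, Finset.mem_filter, Finset.mem_univ, true_and, hs]
    constructor
    · rintro ⟨i, hri, rfl⟩
      exact ⟨⟨i, rfl⟩, hri⟩
    · rintro ⟨⟨i, rfl⟩, hrc⟩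
      exact ⟨i, hrc, rfl⟩
  have := congrArg Finset.card himg
  rw [Finset.card_image_of_injective _ hinj'] at this
  rw [this, hfeq, ← hvm]

end Key

section B

variable {Ω : Type*} [MeasureSpace Ω] [IsProbabilityMeasure (ℙ : Measure Ω)]
  {n : ℕ} (X : Fin n → Ω → ℝ)

lemma exists_level_pos (hX : ∀ i, Measurable (X i)) (hpos : ∀ i ω, 0 < X i ω)
    (hnoties : ∀ i j : Fin n, i ≠ j → ℙ {ω | X i ω = X j ω} = 0)
    {m : ℕ} (hm1 : 1 ≤ m) (hm2 : m < n) :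
    ∃ t : ℝ, 0 < t ∧ 0 < ℙ {ω | (Finset.univ.filter fun i => t < X i ω).card = m} := by
  by_contra hcon
  push_neg at hcon
  have hnull : ∀ (r : ℚ),
      ℙ {ω | 0 < (r:ℝ) ∧ (Finset.univ.filter fun i => (r:ℝ) < X i ω).card = m} = 0 := by
    intro r
    by_cases hr : 0 < (r:ℝ)
    · have h0 : ℙ {ω | (Finset.univ.filter fun i => (r:ℝ) < X i ω).card = m} = 0 :=
        le_antisymm (hcon (r:ℝ) hr) (by simp)
      exact measure_mono_null (fun ω hω => hω.2) h0
    · have : {ω : Ω | 0 < (r:ℝ) ∧ (Finset.univ.filter fun i => (r:ℝ) < X i ω).card = m}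
          = ∅ := by
        ext ω; simp only [Set.mem_setOf_eq, Set.mem_empty_iff_false, iff_false]
        intro h; exact hr h.1
      rw [this]; exact measure_empty
  have hUnull : ℙ (⋃ r : ℚ,
      {ω | 0 < (r:ℝ) ∧ (Finset.univ.filter fun i => (r:ℝ) < X i ω).card = m}) = 0 :=
    measure_iUnion_null hnull
  have hbad : ℙ (⋃ i, ⋃ j, ⋃ _ : i ≠ j, {ω | X i ω = X j ω}) = 0 := by
    apply measure_iUnion_null; intro i
    apply measure_iUnion_null; intro j
    apply measure_iUnion_null; intro hij
    exact hnoties i j hij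
  have hcover : (Set.univ : Set Ω) ⊆ (⋃ i, ⋃ j, ⋃ _ : i ≠ j, {ω | X i ω = X j ω}) ∪
      (⋃ r : ℚ, {ω | 0 < (r:ℝ) ∧ (Finset.univ.filter fun i => (r:ℝ) < X i ω).card = m}) := by
    intro ω _
    by_cases hd : ∃ i j : Fin n, i ≠ j ∧ X i ω = X j ω
    · left
      obtain ⟨i, j, hij, h⟩ := hd
      exact Set.mem_iUnion.2 ⟨i, Set.mem_iUnion.2 ⟨j, Set.mem_iUnion.2 ⟨hij, h⟩⟩⟩
    · right
      push_neg at hd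
      obtain ⟨r, hr0, hrm⟩ := keyPoint (fun i => X i ω) (fun i => hpos i ω)
        (fun i j hij => hd i j hij) hm1 hm2
      exact Set.mem_iUnion.2 ⟨r, hr0, hrm⟩
  have hcontr : (1 : ENNReal) ≤ 0 := by
    calc (1 : ENNReal) = ℙ (Set.univ : Set Ω) := measure_univ.symm
      _ ≤ _ := measure_mono hcover
      _ ≤ _ + _ := measure_union_le _ _
      _ = 0 := by rw [hbad, hUnull, add_zero]
  simp at hcontr

end B

end SC17

/-- Theorem 7 (final): assume no ties, and take as given the formula
`Pr(T = X_{k:n}) = φ^q_{n-k+1} - φ^q_{n-k}` (hypothesis `hPT`, with `q` the relative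
quality function). Then the following are equivalent:
(i) both the representation `Pr(T > t) = ∑_k Pr(T = X_{k:n}) Pr(X_{k:n} > t)` and the
signature representation `Pr(T > t) = ∑_k (φ_{n-k+1} - φ_{n-k}) Pr(X_{k:n} > t)` hold for
every semicoherent `φ` and every `t > 0`;
(ii) `Pr(T = X_{k:n}) = φ_{n-k+1} - φ_{n-k}` for every semicoherent `φ` and `k ∈ [n]`, and
the states `χ_1(t), …, χ_n(t)` are exchangeable for every `t > 0`;
(iii) `q(A) = 1/C(n,|A|)` for all `A`, and the states are exchangeable for every `t > 0`.
Here `Pr(T > t) = Pr(φ(χ(t)) = 1)` and `(X_{k:n} > t)` is the event that at least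
`n - k + 1` of the `X_i` exceed `t`. -/
theorem stmt_17 (n : ℕ) (hn : 2 ≤ n)
    {Ω : Type*} [MeasureSpace Ω] [IsProbabilityMeasure (ℙ : Measure Ω)]
    (X : Fin n → Ω → ℝ) (hX : ∀ i, Measurable (X i)) (hpos : ∀ i ω, 0 < X i ω)
    (hnoties : ∀ i j : Fin n, i ≠ j → ℙ {ω | X i ω = X j ω} = 0)
    (q : (Fin n → Bool) → ℝ)
    (hq : ∀ x, q x =
      (ℙ {ω | ∀ i, x i = false → ∀ j, x j = true → X i ω < X j ω}).toReal)
    (PT : ((Fin n → Bool) → Bool) → ℕ → ℝ)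
    (hPT : ∀ φ : (Fin n → Bool) → Bool, Semicoherent φ → ∀ k ∈ Finset.Icc 1 n,
      PT φ k =
        (∑ x ∈ Finset.univ.filter (fun x : Fin n → Bool => cntOnes x = n - k + 1),
          q x * (if φ x then (1 : ℝ) else 0)) -
        (∑ x ∈ Finset.univ.filter (fun x : Fin n → Bool => cntOnes x = n - k),
          q x * (if φ x then (1 : ℝ) else 0))) :
    ((∀ φ : (Fin n → Bool) → Bool, Semicoherent φ → ∀ t : ℝ, 0 < t →
        (ℙ {ω | φ (fun i => decide (t < X i ω)) = true}).toReal =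
          (∑ k ∈ Finset.Icc 1 n, PT φ k *
            (ℙ {ω | n + 1 - k ≤ (Finset.univ.filter fun i => t < X i ω).card}).toReal) ∧
        (ℙ {ω | φ (fun i => decide (t < X i ω)) = true}).toReal =
          ∑ k ∈ Finset.Icc 1 n, (phiAvg φ (n - k + 1) - phiAvg φ (n - k)) *
            (ℙ {ω | n + 1 - k ≤ (Finset.univ.filter fun i => t < X i ω).card}).toReal) ↔
      ((∀ φ : (Fin n → Bool) → Bool, Semicoherent φ → ∀ k ∈ Finset.Icc 1 n,
          PT φ k = phiAvg φ (n - k + 1) - phiAvg φ (n - k)) ∧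
        (∀ t : ℝ, 0 < t → ∀ x x' : Fin n → Bool, cntOnes x = cntOnes x' →
          ℙ {ω | (fun i => decide (t < X i ω)) = x} =
            ℙ {ω | (fun i => decide (t < X i ω)) = x'}))) ∧
    (((∀ φ : (Fin n → Bool) → Bool, Semicoherent φ → ∀ k ∈ Finset.Icc 1 n,
          PT φ k = phiAvg φ (n - k + 1) - phiAvg φ (n - k)) ∧
        (∀ t : ℝ, 0 < t → ∀ x x' : Fin n → Bool, cntOnes x = cntOnes x' →
          ℙ {ω | (fun i => decide (t < X i ω)) = x} =
            ℙ {ω | (fun i => decide (t < X i ω)) = x'})) ↔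
      ((∀ x : Fin n → Bool, q x = 1 / (n.choose (cntOnes x) : ℝ)) ∧
        (∀ t : ℝ, 0 < t → ∀ x x' : Fin n → Bool, cntOnes x = cntOnes x' →
          ℙ {ω | (fun i => decide (t < X i ω)) = x} =
            ℙ {ω | (fun i => decide (t < X i ω)) = x'}))) := by
  have hq_top : q (fun _ : Fin n => true) = 1 := by
    rw [hq]
    have hset : {ω : Ω | ∀ i, (fun _ : Fin n => true) i = false →
        ∀ j, (fun _ : Fin n => true) j = true → X i ω < X j ω} = Set.univ := by
      ext ω; simp
    rw [hset, measure_univ, ENNReal.toReal_one]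
  have hq_bot : q (fun _ : Fin n => false) = 1 := by
    rw [hq]
    have hset : {ω : Ω | ∀ i, (fun _ : Fin n => false) i = false →
        ∀ j, (fun _ : Fin n => false) j = true → X i ω < X j ω} = Set.univ := by
      ext ω; simp
    rw [hset, measure_univ, ENNReal.toReal_one]
  have hPhiP : ∀ (φ : (Fin n → Bool) → Bool) (t : ℝ),
      (ℙ {ω | φ (fun i => decide (t < X i ω)) = true}).toReal =
        ∑ x ∈ Finset.univ.filter (fun x : Fin n → Bool => φ x = true),
          (ℙ {ω | (fun i => decide (t < X i ω)) = x}).toReal :=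
    fun φ t => SC17.toReal_partition X hX (fun x => φ x = true) t
  have htail : ∀ (t : ℝ) (k : ℕ),
      (ℙ {ω | n + 1 - k ≤ (Finset.univ.filter fun i => t < X i ω).card}).toReal =
        ∑ x ∈ Finset.univ.filter (fun x : Fin n → Bool => n + 1 - k ≤ cntOnes x),
          (ℙ {ω | (fun i => decide (t < X i ω)) = x}).toReal := by
    intro t k
    have hset : {ω : Ω | n + 1 - k ≤ (Finset.univ.filter fun i => t < X i ω).card} =
        {ω : Ω | n + 1 - k ≤ cntOnes (fun i => decide (t < X i ω))} := by
      ext ω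
      simp only [Set.mem_setOf_eq]
      rw [SC17.cnt_bridge X t ω]
    rw [hset]
    exact SC17.toReal_partition X hX (fun x => n + 1 - k ≤ cntOnes x) t
  have hpm : ∀ (t : ℝ) (m : ℕ),
      (ℙ {ω | (Finset.univ.filter fun i => t < X i ω).card = m}).toReal =
        ∑ x ∈ Finset.univ.filter (fun x : Fin n → Bool => cntOnes x = m),
          (ℙ {ω | (fun i => decide (t < X i ω)) = x}).toReal := by
    intro t m
    have hset : {ω : Ω | (Finset.univ.filter fun i => t < X i ω).card = m} =
        {ω : Ω | cntOnes (fun i => decide (t < X i ω)) = m} := by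
      ext ω
      simp only [Set.mem_setOf_eq]
      rw [SC17.cnt_bridge X t ω]
    rw [hset]
    exact SC17.toReal_partition X hX (fun x => cntOnes x = m) t
  -- unconditional identity for the signature-representation RHS
  have hRHS2 : ∀ (φ : (Fin n → Bool) → Bool), φ (fun _ => false) = false → ∀ t : ℝ,
      (∑ k ∈ Finset.Icc 1 n, (phiAvg φ (n - k + 1) - phiAvg φ (n - k)) *
        (ℙ {ω | n + 1 - k ≤ (Finset.univ.filter fun i => t < X i ω).card}).toReal)
      = ∑ y ∈ Finset.univ.filter (fun y : Fin n → Bool => φ y = true),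
          (ℙ {ω | (Finset.univ.filter fun i => t < X i ω).card = cntOnes y}).toReal *
            ((n.choose (cntOnes y) : ℝ))⁻¹ := by
    intro φ hbot t
    calc (∑ k ∈ Finset.Icc 1 n, (phiAvg φ (n - k + 1) - phiAvg φ (n - k)) *
        (ℙ {ω | n + 1 - k ≤ (Finset.univ.filter fun i => t < X i ω).card}).toReal)
        = ∑ k ∈ Finset.Icc 1 n, (phiAvg φ (n - k + 1) - phiAvg φ (n - k)) *
            (∑ x ∈ Finset.univ.filter (fun x : Fin n → Bool => n + 1 - k ≤ cntOnes x),
              (ℙ {ω | (fun i => decide (t < X i ω)) = x}).toReal) :=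
          Finset.sum_congr rfl (fun k _ => by rw [htail t k])
      _ = ∑ x : Fin n → Bool,
            (ℙ {ω | (fun i => decide (t < X i ω)) = x}).toReal * phiAvg φ (cntOnes x) :=
          SC17.abel n _ (phiAvg φ) (SC17.phiAvg_zero φ hbot)
      _ = ∑ x : Fin n → Bool, (ℙ {ω | (fun i => decide (t < X i ω)) = x}).toReal *
            (∑ y ∈ Finset.univ.filter (fun y : Fin n → Bool => cntOnes y = cntOnes x),
              ((n.choose (cntOnes y) : ℝ))⁻¹ * (if φ y then (1:ℝ) else 0)) :=
          Finset.sum_congr rfl (fun x _ => by rw [← SC17.phiAvg_eq_sum])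
      _ = ∑ y ∈ Finset.univ.filter (fun y : Fin n → Bool => φ y = true),
            (∑ x ∈ Finset.univ.filter (fun x : Fin n → Bool => cntOnes x = cntOnes y),
              (ℙ {ω | (fun i => decide (t < X i ω)) = x}).toReal) *
              ((n.choose (cntOnes y) : ℝ))⁻¹ :=
          SC17.key_id _ φ _
      _ = ∑ y ∈ Finset.univ.filter (fun y : Fin n → Bool => φ y = true),
            (ℙ {ω | (Finset.univ.filter fun i => t < X i ω).card = cntOnes y}).toReal *
              ((n.choose (cntOnes y) : ℝ))⁻¹ :=
          Finset.sum_congr rfl (fun y _ => by rw [← hpm t (cntOnes y)])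
  -- identity for the PT-representation RHS (via hPT)
  have hRHS1 : ∀ (φ : (Fin n → Bool) → Bool), Semicoherent φ → ∀ t : ℝ,
      (∑ k ∈ Finset.Icc 1 n, PT φ k *
        (ℙ {ω | n + 1 - k ≤ (Finset.univ.filter fun i => t < X i ω).card}).toReal)
      = ∑ y ∈ Finset.univ.filter (fun y : Fin n → Bool => φ y = true),
          (ℙ {ω | (Finset.univ.filter fun i => t < X i ω).card = cntOnes y}).toReal * q y := by
    intro φ hφ t
    have hc0 : (∑ x ∈ Finset.univ.filter (fun x : Fin n → Bool => cntOnes x = 0),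
        q x * (if φ x then (1:ℝ) else 0)) = 0 := by
      rw [SC17.level_zero, Finset.sum_singleton, hφ.2.1]
      simp
    calc (∑ k ∈ Finset.Icc 1 n, PT φ k *
        (ℙ {ω | n + 1 - k ≤ (Finset.univ.filter fun i => t < X i ω).card}).toReal)
        = ∑ k ∈ Finset.Icc 1 n,
            ((∑ x ∈ Finset.univ.filter (fun x : Fin n → Bool => cntOnes x = n - k + 1),
              q x * (if φ x then (1:ℝ) else 0)) -
             (∑ x ∈ Finset.univ.filter (fun x : Fin n → Bool => cntOnes x = n - k),
              q x * (if φ x then (1:ℝ) else 0))) *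
            (∑ x ∈ Finset.univ.filter (fun x : Fin n → Bool => n + 1 - k ≤ cntOnes x),
              (ℙ {ω | (fun i => decide (t < X i ω)) = x}).toReal) :=
          Finset.sum_congr rfl (fun k hk => by rw [hPT φ hφ k hk, htail t k])
      _ = ∑ x : Fin n → Bool,
            (ℙ {ω | (fun i => decide (t < X i ω)) = x}).toReal *
            (∑ y ∈ Finset.univ.filter (fun y : Fin n → Bool => cntOnes y = cntOnes x),
              q y * (if φ y then (1:ℝ) else 0)) :=
          SC17.abel n _
            (fun j => ∑ x ∈ Finset.univ.filter (fun x : Fin n → Bool => cntOnes x = j),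
              q x * (if φ x then (1:ℝ) else 0)) hc0
      _ = ∑ y ∈ Finset.univ.filter (fun y : Fin n → Bool => φ y = true),
            (∑ x ∈ Finset.univ.filter (fun x : Fin n → Bool => cntOnes x = cntOnes y),
              (ℙ {ω | (fun i => decide (t < X i ω)) = x}).toReal) * q y :=
          SC17.key_id _ φ q
      _ = ∑ y ∈ Finset.univ.filter (fun y : Fin n → Bool => φ y = true),
            (ℙ {ω | (Finset.univ.filter fun i => t < X i ω).card = cntOnes y}).toReal * q y :=
          Finset.sum_congr rfl (fun y _ => by rw [← hpm t (cntOnes y)])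
  -- q uniform implies the PT formula
  have hPT_of_q : (∀ x : Fin n → Bool, q x = 1 / (n.choose (cntOnes x) : ℝ)) →
      ∀ φ : (Fin n → Bool) → Bool, Semicoherent φ → ∀ k ∈ Finset.Icc 1 n,
        PT φ k = phiAvg φ (n - k + 1) - phiAvg φ (n - k) := by
    intro hqe φ hφ k hk
    rw [hPT φ hφ k hk]
    have e : ∀ j : ℕ, (∑ x ∈ Finset.univ.filter (fun x : Fin n → Bool => cntOnes x = j),
        q x * (if φ x then (1:ℝ) else 0)) = phiAvg φ j := by
      intro j
      rw [SC17.phiAvg_eq_sum]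
      apply Finset.sum_congr rfl
      intro x hx
      rw [hqe x, one_div]
    rw [e, e]
  -- the PT formula (for all φ) implies q uniform
  have hq_of_PT : (∀ φ : (Fin n → Bool) → Bool, Semicoherent φ → ∀ k ∈ Finset.Icc 1 n,
        PT φ k = phiAvg φ (n - k + 1) - phiAvg φ (n - k)) →
      ∀ x : Fin n → Bool, q x = 1 / (n.choose (cntOnes x) : ℝ) := by
    intro hPTeq x0
    by_cases hc1 : 1 ≤ cntOnes x0
    · by_cases hcn : cntOnes x0 = n
      · rw [SC17.eq_top_of_cnt hcn, hq_top, SC17.cntOnes_top, Nat.choose_self]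
        norm_num
      · have hcle := SC17.cntOnes_le x0
        have hk : n - cntOnes x0 + 1 ∈ Finset.Icc 1 n := by
          simp only [Finset.mem_Icc]; omega
        have heq := hPTeq (SC17.phiUp x0) (SC17.semicoherent_phiUp x0 hc1) _ hk
        rw [hPT _ (SC17.semicoherent_phiUp x0 hc1) _ hk] at heq
        have e1 : n - (n - cntOnes x0 + 1) + 1 = cntOnes x0 := by omega
        have e2 : n - (n - cntOnes x0 + 1) = cntOnes x0 - 1 := by omega
        rw [e1, e2] at heq
        have hlt : cntOnes x0 - 1 < cntOnes x0 := by omega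
        have s1 : (∑ x ∈ Finset.univ.filter
              (fun x : Fin n → Bool => cntOnes x = cntOnes x0),
            q x * (if SC17.phiUp x0 x then (1:ℝ) else 0)) = q x0 := by
          rw [SC17.sum_mul_ite, SC17.filter_phiUp_level_self x0, Finset.sum_singleton]
        have s2 : (∑ x ∈ Finset.univ.filter
              (fun x : Fin n → Bool => cntOnes x = cntOnes x0 - 1),
            q x * (if SC17.phiUp x0 x then (1:ℝ) else 0)) = 0 := by
          rw [SC17.sum_mul_ite, SC17.filter_phiUp_level_lt x0 hlt, Finset.sum_empty]
        have s3 : phiAvg (SC17.phiUp x0) (cntOnes x0) = ((n.choose (cntOnes x0) : ℝ))⁻¹ := by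
          rw [phiAvg, SC17.sum_ite_card, SC17.filter_phiUp_level_self x0,
            Finset.card_singleton]
          norm_num
        have s4 : phiAvg (SC17.phiUp x0) (cntOnes x0 - 1) = 0 := by
          rw [phiAvg, SC17.sum_ite_card, SC17.filter_phiUp_level_lt x0 hlt]
          simp
        rw [s1, s2, s3, s4, sub_zero, sub_zero] at heq
        rw [heq, one_div]
    · have h0 : cntOnes x0 = 0 := by omega
      rw [SC17.eq_bot_of_cnt h0, hq_bot, SC17.cntOnes_bot, Nat.choose_zero_right]
      norm_num
  refine ⟨⟨?_, ?_⟩, ?_⟩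
  · -- (i) → (ii)
    intro hI
    have hexch : ∀ t : ℝ, 0 < t → ∀ x x' : Fin n → Bool, cntOnes x = cntOnes x' →
        ℙ {ω | (fun i => decide (t < X i ω)) = x} =
          ℙ {ω | (fun i => decide (t < X i ω)) = x'} := by
      intro t ht
      have hsum : ∀ φ : (Fin n → Bool) → Bool, Semicoherent φ →
          ∑ x ∈ Finset.univ.filter (fun x : Fin n → Bool => φ x = true),
            ((ℙ {ω | (fun i => decide (t < X i ω)) = x}).toReal
              - (ℙ {ω | (Finset.univ.filter fun i => t < X i ω).card = cntOnes x}).toReal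
                * ((n.choose (cntOnes x) : ℝ))⁻¹) = 0 := by
        intro φ hφ
        have h2 := (hI φ hφ t ht).2
        rw [hPhiP φ t, hRHS2 φ hφ.2.1 t] at h2
        rw [Finset.sum_sub_distrib, h2, sub_self]
      have hzero : ∀ x : Fin n → Bool,
          (ℙ {ω | (fun i => decide (t < X i ω)) = x}).toReal
            = (ℙ {ω | (Finset.univ.filter fun i => t < X i ω).card = cntOnes x}).toReal
              * ((n.choose (cntOnes x) : ℝ))⁻¹ := by
        have hmob := SC17.mobius1 n (le_trans one_le_two hn)
          (fun x => (ℙ {ω | (fun i => decide (t < X i ω)) = x}).toReal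
            - (ℙ {ω | (Finset.univ.filter fun i => t < X i ω).card = cntOnes x}).toReal
              * ((n.choose (cntOnes x) : ℝ))⁻¹)
          (by
            intro x0 hx0
            have hs := hsum (SC17.phiUp x0) (SC17.semicoherent_phiUp x0 hx0)
            rw [SC17.filter_phiUp_univ x0] at hs
            exact hs)
        intro x
        by_cases h1 : 1 ≤ cntOnes x
        · have := hmob x h1
          have h' : (ℙ {ω | (fun i => decide (t < X i ω)) = x}).toReal
              - (ℙ {ω | (Finset.univ.filter fun i => t < X i ω).card = cntOnes x}).toReal
                * ((n.choose (cntOnes x) : ℝ))⁻¹ = 0 := this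
          linarith
        · have h0 : cntOnes x = 0 := by omega
          rw [SC17.eq_bot_of_cnt h0, SC17.cntOnes_bot, hpm t 0, SC17.level_zero,
            Finset.sum_singleton, Nat.choose_zero_right]
          norm_num
      intro x x' hxx
      have e1 := hzero x
      have e2 := hzero x'
      rw [hxx] at e1
      have e3 : (ℙ {ω | (fun i => decide (t < X i ω)) = x}).toReal =
          (ℙ {ω | (fun i => decide (t < X i ω)) = x'}).toReal := by rw [e1, e2]
      exact (ENNReal.toReal_eq_toReal_iff' (measure_ne_top _ _) (measure_ne_top _ _)).mp e3
    have hqe : ∀ x : Fin n → Bool, q x = 1 / (n.choose (cntOnes x) : ℝ) := by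
      have hg := SC17.mobius2 n
        (fun x : Fin n → Bool => ((n.choose (cntOnes x) : ℝ))⁻¹ - q x)
        (fun m t => (ℙ {ω | (Finset.univ.filter fun i => t < X i ω).card = m}).toReal)
        (by
          intro x0 hx0 t ht
          have h1 := (hI (SC17.phiUp x0) (SC17.semicoherent_phiUp x0 hx0) t ht).1
          have h2 := (hI (SC17.phiUp x0) (SC17.semicoherent_phiUp x0 hx0) t ht).2
          rw [hRHS1 _ (SC17.semicoherent_phiUp x0 hx0) t] at h1
          rw [hRHS2 _ (SC17.phiUp_bot x0 hx0) t] at h2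
          have h3 := h1.symm.trans h2
          rw [SC17.filter_phiUp_univ x0] at h3
          show ∑ y ∈ Finset.univ.filter (SC17.leB x0),
            (ℙ {ω | (Finset.univ.filter fun i => t < X i ω).card = cntOnes y}).toReal *
              (((n.choose (cntOnes y) : ℝ))⁻¹ - q y) = 0
          have h4 : ∑ y ∈ Finset.univ.filter (SC17.leB x0),
              (ℙ {ω | (Finset.univ.filter fun i => t < X i ω).card = cntOnes y}).toReal *
                (((n.choose (cntOnes y) : ℝ))⁻¹ - q y)
              = (∑ y ∈ Finset.univ.filter (SC17.leB x0),
                  (ℙ {ω | (Finset.univ.filter fun i => t < X i ω).card = cntOnes y}).toReal *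
                    ((n.choose (cntOnes y) : ℝ))⁻¹)
                - ∑ y ∈ Finset.univ.filter (SC17.leB x0),
                  (ℙ {ω | (Finset.univ.filter fun i => t < X i ω).card = cntOnes y}).toReal *
                    q y := by
            rw [← Finset.sum_sub_distrib]
            exact Finset.sum_congr rfl (fun y _ => by ring)
          rw [h4, ← h3, sub_self])
        (by
          intro m hm1 hm2
          obtain ⟨t, ht, hp⟩ := SC17.exists_level_pos X hX hpos hnoties hm1 hm2
          exact ⟨t, ht, ENNReal.toReal_pos hp.ne' (measure_ne_top _ _)⟩)
        (by
          intro x hx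
          show ((n.choose (cntOnes x) : ℝ))⁻¹ - q x = 0
          rw [SC17.eq_top_of_cnt hx, SC17.cntOnes_top, Nat.choose_self, hq_top]
          norm_num)
      intro x
      by_cases h1 : 1 ≤ cntOnes x
      · have h' : ((n.choose (cntOnes x) : ℝ))⁻¹ - q x = 0 := hg x h1
        rw [one_div]
        linarith
      · have h0 : cntOnes x = 0 := by omega
        rw [SC17.eq_bot_of_cnt h0, hq_bot, SC17.cntOnes_bot, Nat.choose_zero_right]
        norm_num
    exact ⟨hPT_of_q hqe, hexch⟩
  · -- (ii) → (i)
    rintro ⟨hPTeq, hexch⟩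
    intro φ hφ t ht
    have hfib : ∀ x : Fin n → Bool,
        (ℙ {ω | (Finset.univ.filter fun i => t < X i ω).card = cntOnes x}).toReal
          * ((n.choose (cntOnes x) : ℝ))⁻¹
        = (ℙ {ω | (fun i => decide (t < X i ω)) = x}).toReal := by
      intro x
      have hconst : ∀ x' ∈ Finset.univ.filter
          (fun x' : Fin n → Bool => cntOnes x' = cntOnes x),
          (ℙ {ω | (fun i => decide (t < X i ω)) = x'}).toReal
            = (ℙ {ω | (fun i => decide (t < X i ω)) = x}).toReal := by
        intro x' hx'
        simp only [Finset.mem_filter] at hx'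
        rw [hexch t ht x' x hx'.2]
      rw [hpm t (cntOnes x), Finset.sum_congr rfl hconst, Finset.sum_const,
        SC17.card_level, nsmul_eq_mul]
      have hC : (0:ℝ) < (n.choose (cntOnes x) : ℝ) := by
        exact_mod_cast Nat.choose_pos (SC17.cntOnes_le x)
      rw [mul_comm ((n.choose (cntOnes x) : ℝ)) _, mul_assoc,
        mul_inv_cancel₀ hC.ne', mul_one]
    have hrep2 : (ℙ {ω | φ (fun i => decide (t < X i ω)) = true}).toReal =
        ∑ k ∈ Finset.Icc 1 n, (phiAvg φ (n - k + 1) - phiAvg φ (n - k)) *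
          (ℙ {ω | n + 1 - k ≤ (Finset.univ.filter fun i => t < X i ω).card}).toReal := by
      rw [hRHS2 φ hφ.2.1 t, hPhiP φ t]
      exact (Finset.sum_congr rfl (fun y _ => hfib y)).symm
    refine ⟨?_, hrep2⟩
    have hstep : ∑ k ∈ Finset.Icc 1 n, PT φ k *
        (ℙ {ω | n + 1 - k ≤ (Finset.univ.filter fun i => t < X i ω).card}).toReal
      = ∑ k ∈ Finset.Icc 1 n, (phiAvg φ (n - k + 1) - phiAvg φ (n - k)) *
        (ℙ {ω | n + 1 - k ≤ (Finset.univ.filter fun i => t < X i ω).card}).toReal :=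
      Finset.sum_congr rfl (fun k hk => by rw [hPTeq φ hφ k hk])
    rw [hstep]
    exact hrep2
  · -- (ii) ↔ (iii)
    constructor
    · rintro ⟨hPTeq, hexch⟩
      exact ⟨hq_of_PT hPTeq, hexch⟩
    · rintro ⟨hqe, hexch⟩
      exact ⟨hPT_of_q hqe, hexch⟩
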